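/- Let f_A, f_a > 0, let n_A, n_a : [0,∞) → [0,∞) be continuous with f_A n_A(s) + f_a n_a(s) > 0 for all s ≥ 0, and let r ∈ [0,1]. Suppose g, p : [0,∞) → ℝ are differentiable and satisfy, for all t ≥ 0, g'(t) = −g(t)·r f_A f_a (n_A(t) + n_a(t))/(f_A n_A(t) + f_a n_a(t)) and p'(t) = g(t)·r f_A f_a n_A(t)/(f_A n_A(t) + f_a n_a(t)). Then for all t ≥ 0, p(t) = p(0) + g(0)·F(r,t), where F(r,t) = ∫₀ᵗ [r f_A f_a n_A(s)/(f_A n_A(s) + f_a n_a(s))]·exp(−r f_A f_a ∫₀ˢ (n_A(u) + n_a(u))/(f_A n_A(u) + f_a n_a(u)) du) ds. -/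

import Mathlib

open MeasureTheory

/-- The recombination weight function
`F(r,t) = ∫₀ᵗ (r f_A f_a n_A(s)/(f_A n_A(s)+f_a n_a(s)))
          exp(−r f_A f_a ∫₀ˢ (n_A(u)+n_a(u))/(f_A n_A(u)+f_a n_a(u)) du) ds`. -/
noncomputable def Fweight (fA fa r : ℝ) (nA na : ℝ → ℝ) (t : ℝ) : ℝ :=
  ∫ s in (0:ℝ)..t,
    (r * fA * fa * nA s / (fA * nA s + fa * na s)) *
      Real.exp (-(r * fA * fa *
        ∫ u in (0:ℝ)..s, (nA u + na u) / (fA * nA u + fa * na u)))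

/-- Integration of the reduced system: if `g' = −g·r f_A f_a (n_A+n_a)/(f_A n_A+f_a n_a)`
and `p' = g·r f_A f_a n_A/(f_A n_A+f_a n_a)`, then `p(t) = p(0) + g(0)·F(r,t)`. -/
theorem reduced_system_solution
    (fA fa : ℝ) (hfA : 0 < fA) (hfa : 0 < fa)
    (nA na : ℝ → ℝ)
    (hcA : ContinuousOn nA (Set.Ici 0)) (hca : ContinuousOn na (Set.Ici 0))
    (hnA : ∀ s, 0 ≤ s → 0 ≤ nA s) (hna : ∀ s, 0 ≤ s → 0 ≤ na s)
    (hden : ∀ s, 0 ≤ s → 0 < fA * nA s + fa * na s)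
    (r : ℝ) (hr : r ∈ Set.Icc (0:ℝ) 1)
    (g p : ℝ → ℝ)
    (hg : ∀ t, 0 ≤ t → HasDerivAt g
      (-(g t) * (r * fA * fa * (nA t + na t) / (fA * nA t + fa * na t))) t)
    (hp : ∀ t, 0 ≤ t → HasDerivAt p
      (g t * (r * fA * fa * nA t / (fA * nA t + fa * na t))) t) :
    ∀ t, 0 ≤ t → p t = p 0 + g 0 * Fweight fA fa r nA na t := by
  -- extended (continuous on all of ℝ) versions of nA, na
  set mA : ℝ → ℝ := fun u => nA (max u 0) with hmA
  set ma : ℝ → ℝ := fun u => na (max u 0) with hma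
  have hmax : Continuous (fun u : ℝ => max u 0) := continuous_id.max continuous_const
  have hmem : ∀ u : ℝ, max u 0 ∈ Set.Ici (0:ℝ) := fun u => le_max_right u 0
  have hcmA : Continuous mA := hcA.comp_continuous hmax hmem
  have hcma : Continuous ma := hca.comp_continuous hmax hmem
  have hdenm : ∀ u : ℝ, 0 < fA * mA u + fa * ma u := fun u => hden _ (hmem u)
  have heqA : ∀ u : ℝ, 0 ≤ u → mA u = nA u := fun u hu => by
    simp [hmA, max_eq_left hu]
  have heqa : ∀ u : ℝ, 0 ≤ u → ma u = na u := fun u hu => by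
    simp [hma, max_eq_left hu]
  set q : ℝ → ℝ := fun u => (mA u + ma u) / (fA * mA u + fa * ma u) with hqdef
  have hcq : Continuous q := by
    apply (hcmA.add hcma).div ((continuous_const.mul hcmA).add (continuous_const.mul hcma))
    exact fun u => (hdenm u).ne'
  set A : ℝ → ℝ := fun u => r * fA * fa * mA u / (fA * mA u + fa * ma u) with hAdef
  have hcAf : Continuous A := by
    apply (continuous_const.mul hcmA).div
      ((continuous_const.mul hcmA).add (continuous_const.mul hcma))
    exact fun u => (hdenm u).ne'
  set I : ℝ → ℝ := fun s => ∫ u in (0:ℝ)..s, q u with hIdef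
  have hIderiv : ∀ s : ℝ, HasDerivAt I (q s) s := fun s =>
    intervalIntegral.integral_hasDerivAt_right (hcq.intervalIntegrable 0 s)
      hcq.aestronglyMeasurable.stronglyMeasurableAtFilter hcq.continuousAt
  have hIcont : Continuous I := continuous_iff_continuousAt.2 fun s => (hIderiv s).continuousAt
  have hI0 : I 0 = 0 := intervalIntegral.integral_same
  set c : ℝ := r * fA * fa with hcdef
  set E : ℝ → ℝ := fun s => Real.exp (-(c * I s)) with hEdef
  have hEcont : Continuous E := Real.continuous_exp.comp ((continuous_const.mul hIcont).neg)
  -- Step 1: g x = g 0 * E x for x ≥ 0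
  have hgval : ∀ x : ℝ, 0 ≤ x → g x = g 0 * E x := by
    have key : ∀ t : ℝ, 0 ≤ t → g t * Real.exp (c * I t) = g 0 := by
      intro t ht
      have hderiv : ∀ x ∈ Set.uIcc (0:ℝ) t,
          HasDerivAt (fun s => g s * Real.exp (c * I s)) 0 x := by
        intro x hx
        rw [Set.uIcc_of_le ht] at hx
        have hx0 : 0 ≤ x := hx.1
        have hgx := hg x hx0
        have hgx' : HasDerivAt g (-(g x) * (c * q x)) x := by
          have : -(g x) * (r * fA * fa * (nA x + na x) / (fA * nA x + fa * na x))
              = -(g x) * (c * q x) := by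
            rw [hqdef, hcdef]
            simp only [heqA x hx0, heqa x hx0]
            ring
          rwa [this] at hgx
        have hex : HasDerivAt (fun s => Real.exp (c * I s))
            (Real.exp (c * I x) * (c * q x)) x := ((hIderiv x).const_mul c).exp
        have : HasDerivAt (fun s => g s * Real.exp (c * I s)) _ x := hgx'.mul hex
        convert this using 1
        ring
      have hint : IntervalIntegrable (fun _ : ℝ => (0:ℝ)) volume 0 t :=
        intervalIntegrable_const
      have := intervalIntegral.integral_eq_sub_of_hasDerivAt hderiv hint
      simp only [intervalIntegral.integral_zero] at this
      have h0 : g 0 * Real.exp (c * I 0) = g 0 := by simp [hI0]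
      linarith [this, h0]
    intro x hx
    have hk := key x hx
    have hex : Real.exp (c * I x) ≠ 0 := (Real.exp_pos _).ne'
    rw [hEdef]
    simp only
    rw [Real.exp_neg]
    field_simp
    linarith [hk]
  -- Step 2: integrate p'
  intro t ht
  have hderivp : ∀ x ∈ Set.uIcc (0:ℝ) t, HasDerivAt p (g 0 * (A x * E x)) x := by
    intro x hx
    rw [Set.uIcc_of_le ht] at hx
    have hx0 : 0 ≤ x := hx.1
    have hpx := hp x hx0
    have : g x * (r * fA * fa * nA x / (fA * nA x + fa * na x)) = g 0 * (A x * E x) := by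
      rw [hgval x hx0, hAdef]
      simp only [heqA x hx0, heqa x hx0]
      ring
    rwa [this] at hpx
  have hint : IntervalIntegrable (fun x => g 0 * (A x * E x)) volume 0 t :=
    (continuous_const.mul (hcAf.mul hEcont)).intervalIntegrable 0 t
  have hmain := intervalIntegral.integral_eq_sub_of_hasDerivAt hderivp hint
  have hFw : Fweight fA fa r nA na t = ∫ s in (0:ℝ)..t, A s * E s := by
    rw [Fweight]
    apply intervalIntegral.integral_congr
    intro s hs
    rw [Set.uIcc_of_le ht] at hs
    have hs0 : 0 ≤ s := hs.1
    have hin : (∫ u in (0:ℝ)..s, (nA u + na u) / (fA * nA u + fa * na u)) = I s := by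
      rw [hIdef]
      apply intervalIntegral.integral_congr
      intro u hu
      rw [Set.uIcc_of_le hs0] at hu
      rw [hqdef]
      simp only [heqA u hu.1, heqa u hu.1]
    simp only [hin, hAdef, hEdef, hcdef, heqA s hs0, heqa s hs0]
  rw [hFw]
  rw [intervalIntegral.integral_const_mul] at hmain
  linarith [hmain]
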